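/- Let M^(k)_{ℓ..r} be matrices in ℝ^{w×w} defined for dyadic intervals (ℓ,r) and k ∈ ℕ by: M^(k)_{ℓ..r} = M_r when r-ℓ=1, and otherwise M^(k)_{ℓ..r} = ∑_{i+j=k} M^(i)_{ℓ..m}·M^(j)_{m..r} − ∑_{i+j=k-1} M^(i)_{ℓ..m}·M^(j)_{m..r} where m=(ℓ+r)/2. Define Δ^(i)_{ℓ..r} = M^(i)_{ℓ..r} − M_{ℓ..r} where M_{ℓ..r} = ∏_{i=ℓ+1}^r M_i. Then for every dyadic pair (ℓ,r) with r-ℓ > 1 and m=(ℓ+r)/2: Δ^(k)_{ℓ..r} = ∑_{i+j=k} Δ^(i)_{ℓ..m}·Δ^(j)_{m..r} − ∑_{i+j=k-1} Δ^(i)_{ℓ..m}·Δ^(j)_{m..r} + Δ^(k)_{ℓ..m}·M_{m..r} + M_{ℓ..m}·Δ^(k)_{m..r}. -/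

import Mathlib

open Finset Matrix

/-- `(ℓ, r)` is a dyadic interval with right endpoint at most `n`:
`ℓ = i·2^t`, `r = ℓ + 2^t`. -/
def IsDyadic (n ℓ r : ℕ) : Prop :=
  ∃ i t : ℕ, ℓ = i * 2 ^ t ∧ r = ℓ + 2 ^ t ∧ r ≤ n

/-- The ordered product `M_{ℓ..r} = M_{ℓ+1} ⋯ M_r` of the matrices. -/
noncomputable def matProd {w : ℕ} (M : ℕ → Matrix (Fin w) (Fin w) ℝ) (ℓ r : ℕ) :
    Matrix (Fin w) (Fin w) ℝ :=
  ((List.range (r - ℓ)).map fun i => M (ℓ + i + 1)).prod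

lemma matProd_split {w : ℕ} (M : ℕ → Matrix (Fin w) (Fin w) ℝ) {ℓ m r : ℕ}
    (h1 : ℓ ≤ m) (h2 : m ≤ r) :
    matProd M ℓ r = matProd M ℓ m * matProd M m r := by
  unfold matProd
  have : r - ℓ = (m - ℓ) + (r - m) := by omega
  rw [this, List.range_add, List.map_append, List.prod_append, List.map_map]
  congr 2
  apply List.map_congr_left
  intro i hi
  simp only [Function.comp_apply]
  have : ℓ + (m - ℓ + i) + 1 = m + i + 1 := by omega
  rw [this]

lemma key_delta {R : Type*} [Ring R] (A B : ℕ → R) (P Q : R) (k : ℕ) (hk : k ≠ 0) :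
    ((∑ p ∈ antidiagonal k, A p.1 * B p.2) - ∑ p ∈ antidiagonal (k-1), A p.1 * B p.2) - P*Q
    = ((∑ p ∈ antidiagonal k, (A p.1 - P)*(B p.2 - Q))
        - ∑ p ∈ antidiagonal (k-1), (A p.1 - P)*(B p.2 - Q))
        + (A k - P)*Q + P*(B k - Q) := by
  obtain ⟨s, rfl⟩ := Nat.exists_eq_succ_of_ne_zero hk
  have expand : ∀ n : ℕ, ∑ p ∈ antidiagonal n, (A p.1 - P)*(B p.2 - Q)
      = (∑ p ∈ antidiagonal n, A p.1 * B p.2)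
        - (∑ i ∈ range (n+1), A i) * Q - P * (∑ i ∈ range (n+1), B i)
        + (n+1) • (P*Q) := by
    intro n
    have h1 : ∑ p ∈ antidiagonal n, A p.1 * Q = (∑ i ∈ range (n+1), A i) * Q := by
      rw [Finset.sum_mul, Finset.Nat.sum_antidiagonal_eq_sum_range_succ_mk]
    have h2 : ∑ p ∈ antidiagonal n, P * B p.2 = P * ∑ i ∈ range (n+1), B i := by
      rw [Finset.mul_sum, Finset.Nat.sum_antidiagonal_eq_sum_range_succ_mk]
      exact Finset.sum_range_reflect (fun i => P * B i) (n+1)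
    have h3 : ∑ _p ∈ antidiagonal n, P * Q = (n+1) • (P*Q) := by
      rw [Finset.sum_const, Finset.Nat.card_antidiagonal]
    calc ∑ p ∈ antidiagonal n, (A p.1 - P)*(B p.2 - Q)
        = ∑ p ∈ antidiagonal n, (A p.1 * B p.2 - A p.1 * Q - P * B p.2 + P * Q) := by
          apply Finset.sum_congr rfl; intros; noncomm_ring
      _ = _ := by
          simp only [Finset.sum_add_distrib, Finset.sum_sub_distrib, h1, h2, h3]
  rw [expand, expand]
  have hA : ∑ i ∈ range (s+1+1), A i = (∑ i ∈ range (s+1), A i) + A (s+1) :=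
    Finset.sum_range_succ A (s+1)
  have hB : ∑ i ∈ range (s+1+1), B i = (∑ i ∈ range (s+1), B i) + B (s+1) :=
    Finset.sum_range_succ B (s+1)
  simp only [Nat.succ_sub_one, hA, hB, succ_nsmul, add_mul, mul_add, sub_mul, mul_sub]
  abel

/-- Lemma 2.2: the error matrices `Δ^(k)_{ℓ..r} = M^(k)_{ℓ..r} − M_{ℓ..r}` of the
binary recursion satisfy the recursive identity. -/
theorem stmt_1 (w n : ℕ) (M : ℕ → Matrix (Fin w) (Fin w) ℝ)
    (Mk : ℕ → ℕ → ℕ → Matrix (Fin w) (Fin w) ℝ)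
    (hbase : ∀ k ℓ r : ℕ, r = ℓ + 1 → Mk k ℓ r = M r)
    (hrec : ∀ k ℓ r : ℕ, IsDyadic n ℓ r → 1 < r - ℓ →
      Mk k ℓ r =
        (∑ p ∈ Finset.HasAntidiagonal.antidiagonal k, Mk p.1 ℓ ((ℓ + r) / 2) * Mk p.2 ((ℓ + r) / 2) r) -
          (if k = 0 then 0 else
            ∑ p ∈ Finset.HasAntidiagonal.antidiagonal (k - 1), Mk p.1 ℓ ((ℓ + r) / 2) * Mk p.2 ((ℓ + r) / 2) r))
    (Δ : ℕ → ℕ → ℕ → Matrix (Fin w) (Fin w) ℝ)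
    (hΔ : ∀ k ℓ r : ℕ, Δ k ℓ r = Mk k ℓ r - matProd M ℓ r)
    (k ℓ r m : ℕ) (hd : IsDyadic n ℓ r) (hlen : 1 < r - ℓ) (hm : m = (ℓ + r) / 2) :
    Δ k ℓ r =
      (∑ p ∈ Finset.HasAntidiagonal.antidiagonal k, Δ p.1 ℓ m * Δ p.2 m r) -
        (if k = 0 then 0 else ∑ p ∈ Finset.HasAntidiagonal.antidiagonal (k - 1), Δ p.1 ℓ m * Δ p.2 m r) +
        Δ k ℓ m * matProd M m r + matProd M ℓ m * Δ k m r := by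
  have hℓm : ℓ ≤ m := by omega
  have hmr : m ≤ r := by omega
  have hsplit : matProd M ℓ r = matProd M ℓ m * matProd M m r := matProd_split M hℓm hmr
  simp only [hΔ]
  rw [hrec k ℓ r hd hlen, ← hm, hsplit]
  by_cases hk : k = 0
  · subst hk
    simp only [reduceIte, Finset.Nat.antidiagonal_zero, Finset.sum_singleton]
    simp only [sub_mul, mul_sub]
    abel
  · rw [if_neg hk, if_neg hk]
    exact key_delta (fun i => Mk i ℓ m) (fun j => Mk j m r) (matProd M ℓ m) (matProd M m r) k hk
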